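/- In CPE-L, for every arm i, the consistent optimality radius satisfies Λ_i ≥ Δ_i / width(Y), and consequently H^Λ = Σ_i 1/Λ_i² ≤ width(Y)² · Σ_i 1/Δ_i² = width(Y)² · H^Δ. -/

import Mathlib

open scoped ENNReal

/-- in CPE-L, for every arm i, Λ_i ≥ Δ_i / width(Y), and hence
H^Λ = Σ_i 1/Λ_i² ≤ width(Y)² · Σ_i 1/Δ_i², where the bound holds for any exchange
class B for Y whose exchange sets all have size at most w. -/
theorem stmt15 (m : ℕ) (hm : 0 < m)
    (Y : Finset (Finset (Fin m)))
    (θstar : Fin m → ℝ) (hθstar : ∀ j, θstar j ∈ Set.Icc (0:ℝ) 1)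
    (Sstar : Finset (Fin m)) (hSstar : Sstar ∈ Y)
    (huniq : ∀ S ∈ Y, S ≠ Sstar → ∑ j ∈ S, θstar j < ∑ j ∈ Sstar, θstar j)
    (φ : (Fin m → ℝ) → Finset (Fin m))
    (hφ : ∀ θ : Fin m → ℝ, φ θ ∈ Y ∧ ∀ S ∈ Y, ∑ j ∈ S, θ j ≤ ∑ j ∈ φ θ, θ j)
    (hφstar : φ θstar = Sstar)
    (B : Finset (Finset (Fin m) × Finset (Fin m)))
    (hdisj : ∀ b ∈ B, Disjoint b.1 b.2)
    (hexch : ∀ S ∈ Y, ∀ S' ∈ Y, S ≠ S' → ∀ i ∈ S \ S', ∃ b ∈ B,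
      i ∈ b.2 ∧ b.1 ⊆ S' \ S ∧ b.2 ⊆ S \ S' ∧
      (S \ b.2) ∪ b.1 ∈ Y ∧ (S' \ b.1) ∪ b.2 ∈ Y)
    (w : ℕ) (hw : 0 < w) (hwidth : ∀ b ∈ B, b.1.card + b.2.card ≤ w)
    (Δ : Fin m → ℝ)
    (hΔ : ∀ i, Δ i = ∑ j ∈ Sstar, θstar j -
      sSup ((fun S => ∑ j ∈ S, θstar j) '' {S | S ∈ Y ∧ ¬ ((i ∈ S) ↔ (i ∈ Sstar))}))
    (Λ : Fin m → ℝ≥0∞)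
    (hΛ : ∀ i, Λ i = ⨅ (θ : Fin m → ℝ)
      (_ : (∀ j, θ j ∈ Set.Icc (0:ℝ) 1) ∧ ¬ ((i ∈ φ θ) ↔ (i ∈ φ θstar))),
      ⨆ j, ENNReal.ofReal |θ j - θstar j|) :
    (∀ i, ENNReal.ofReal (Δ i / w) ≤ Λ i) ∧
    ∑ i, (Λ i ^ 2)⁻¹ ≤ ENNReal.ofReal ((w : ℝ) ^ 2 * ∑ i, 1 / (Δ i) ^ 2) := by
  -- finiteness / boundedness facts about the disagreement sets
  have hfin : ∀ i : Fin m,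
      ((fun S => ∑ j ∈ S, θstar j) '' {S | S ∈ Y ∧ ¬ ((i ∈ S) ↔ (i ∈ Sstar))}).Finite := by
    intro i
    exact (Y.finite_toSet.image _).subset (Set.image_mono (fun S hS => hS.1))
  have hbdd : ∀ i : Fin m,
      BddAbove ((fun S => ∑ j ∈ S, θstar j) '' {S | S ∈ Y ∧ ¬ ((i ∈ S) ↔ (i ∈ Sstar))}) :=
    fun i => (hfin i).bddAbove
  have hMle : ∀ i : Fin m, ∀ T ∈ Y, ¬ ((i ∈ T) ↔ (i ∈ Sstar)) →
      Δ i ≤ ∑ j ∈ Sstar, θstar j - ∑ j ∈ T, θstar j := by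
    intro i T hT hTi
    have h := le_csSup (hbdd i) ⟨T, ⟨hT, hTi⟩, rfl⟩
    rw [hΔ i]; simp only at h; linarith
  -- the key real inequality
  have key : ∀ θ : Fin m → ℝ, ∀ i : Fin m, ¬ ((i ∈ φ θ) ↔ (i ∈ Sstar)) →
      ∃ j, Δ i ≤ w * |θ j - θstar j| := by
    intro θ i hi
    obtain ⟨hSY, hopt⟩ := hφ θ
    set S := φ θ with hSdef
    by_cases hiS : i ∈ Sstar
    · have hiS' : i ∉ S := fun h => hi ⟨fun _ => hiS, fun _ => h⟩
      have hne : Sstar ≠ S := fun h => hiS' (h ▸ hiS)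
      obtain ⟨b, hbB, hib2, hb1, hb2, hTY, hS''Y⟩ :=
        hexch Sstar hSstar S hSY hne i (Finset.mem_sdiff.mpr ⟨hiS, hiS'⟩)
      -- i ∉ T
      have hib1 : i ∉ b.1 := fun h => (Finset.mem_sdiff.mp (hb1 h)).2 hiS
      have hiT : i ∉ (Sstar \ b.2) ∪ b.1 := by
        simp only [Finset.mem_union, Finset.mem_sdiff]
        rintro (⟨_, h⟩ | h)
        · exact h hib2
        · exact hib1 h
      have hb2sub : b.2 ⊆ Sstar := hb2.trans (Finset.sdiff_subset)
      have hb1sub : b.1 ⊆ S := hb1.trans (Finset.sdiff_subset)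
      have hdb1 : Disjoint (Sstar \ b.2) b.1 := by
        rw [Finset.disjoint_left]
        intro x hx hxb
        exact (Finset.mem_sdiff.mp (hb1 hxb)).2 (Finset.mem_sdiff.mp hx).1
      have hdb2 : Disjoint (S \ b.1) b.2 := by
        rw [Finset.disjoint_left]
        intro x hx hxb
        exact (Finset.mem_sdiff.mp (hb2 hxb)).2 (Finset.mem_sdiff.mp hx).1
      -- identity for θstar sum over T
      have hTsum : ∑ j ∈ (Sstar \ b.2) ∪ b.1, θstar j
          = ∑ j ∈ Sstar, θstar j - ∑ j ∈ b.2, θstar j + ∑ j ∈ b.1, θstar j := by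
        rw [Finset.sum_union hdb1, Finset.sum_sdiff_eq_sub hb2sub]
      have h1 : Δ i ≤ ∑ j ∈ b.2, θstar j - ∑ j ∈ b.1, θstar j := by
        have := hMle i _ hTY (fun h => hiT (h.mpr hiS))
        rw [hTsum] at this; linarith
      -- identity for θ sum over S''
      have hS''sum : ∑ j ∈ (S \ b.1) ∪ b.2, θ j
          = ∑ j ∈ S, θ j - ∑ j ∈ b.1, θ j + ∑ j ∈ b.2, θ j := by
        rw [Finset.sum_union hdb2, Finset.sum_sdiff_eq_sub hb1sub]
      have h2 : ∑ j ∈ b.2, θ j - ∑ j ∈ b.1, θ j ≤ 0 := by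
        have := hopt _ hS''Y
        rw [hS''sum] at this; linarith
      -- combine
      have h3 : Δ i ≤ ∑ j ∈ b.1 ∪ b.2, |θ j - θstar j| := by
        have e1 : ∑ j ∈ b.2, (θstar j - θ j) ≤ ∑ j ∈ b.2, |θ j - θstar j| :=
          Finset.sum_le_sum (fun j _ => by rw [abs_sub_comm]; exact le_abs_self _)
        have e2 : ∑ j ∈ b.1, (θ j - θstar j) ≤ ∑ j ∈ b.1, |θ j - θstar j| :=
          Finset.sum_le_sum (fun j _ => le_abs_self _)
        rw [Finset.sum_union (hdisj b hbB)]
        simp only [Finset.sum_sub_distrib] at e1 e2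
        linarith
      obtain ⟨j0, hj0, hmax⟩ := Finset.exists_max_image (b.1 ∪ b.2)
        (fun j => |θ j - θstar j|) ⟨i, Finset.mem_union_right _ hib2⟩
      refine ⟨j0, h3.trans ?_⟩
      calc ∑ j ∈ b.1 ∪ b.2, |θ j - θstar j|
          ≤ (b.1 ∪ b.2).card • |θ j0 - θstar j0| :=
            Finset.sum_le_card_nsmul _ _ _ (fun x hx => hmax x hx)
        _ = ((b.1 ∪ b.2).card : ℝ) * |θ j0 - θstar j0| := nsmul_eq_mul _ _
        _ ≤ w * |θ j0 - θstar j0| := by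
            apply mul_le_mul_of_nonneg_right _ (abs_nonneg _)
            have := (Finset.card_union_le b.1 b.2).trans (hwidth b hbB)
            exact_mod_cast this
    · have hiS' : i ∈ S := by
        by_contra h
        exact hi ⟨fun h' => absurd h' h, fun h' => absurd h' hiS⟩
      have hne : S ≠ Sstar := fun h => hiS (h ▸ hiS')
      obtain ⟨b, hbB, hib2, hb1, hb2, hS''Y, hTY⟩ :=
        hexch S hSY Sstar hSstar hne i (Finset.mem_sdiff.mpr ⟨hiS', hiS⟩)
      -- here b.1 ⊆ Sstar \ S, b.2 ⊆ S \ Sstar, i ∈ b.2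
      -- T = (Sstar \ b.1) ∪ b.2 ∈ Y, contains i
      have hiT : i ∈ (Sstar \ b.1) ∪ b.2 := Finset.mem_union_right _ hib2
      have hb1sub : b.1 ⊆ Sstar := hb1.trans (Finset.sdiff_subset)
      have hb2sub : b.2 ⊆ S := hb2.trans (Finset.sdiff_subset)
      have hdb1 : Disjoint (Sstar \ b.1) b.2 := by
        rw [Finset.disjoint_left]
        intro x hx hxb
        exact (Finset.mem_sdiff.mp (hb2 hxb)).2 (Finset.mem_sdiff.mp hx).1
      have hdb2 : Disjoint (S \ b.2) b.1 := by
        rw [Finset.disjoint_left]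
        intro x hx hxb
        exact (Finset.mem_sdiff.mp (hb1 hxb)).2 (Finset.mem_sdiff.mp hx).1
      have hTsum : ∑ j ∈ (Sstar \ b.1) ∪ b.2, θstar j
          = ∑ j ∈ Sstar, θstar j - ∑ j ∈ b.1, θstar j + ∑ j ∈ b.2, θstar j := by
        rw [Finset.sum_union hdb1, Finset.sum_sdiff_eq_sub hb1sub]
      have h1 : Δ i ≤ ∑ j ∈ b.1, θstar j - ∑ j ∈ b.2, θstar j := by
        have := hMle i _ hTY (fun h => hiS (h.mp hiT))
        rw [hTsum] at this; linarith
      have hS''sum : ∑ j ∈ (S \ b.2) ∪ b.1, θ j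
          = ∑ j ∈ S, θ j - ∑ j ∈ b.2, θ j + ∑ j ∈ b.1, θ j := by
        rw [Finset.sum_union hdb2, Finset.sum_sdiff_eq_sub hb2sub]
      have h2 : ∑ j ∈ b.1, θ j - ∑ j ∈ b.2, θ j ≤ 0 := by
        have := hopt _ hS''Y
        rw [hS''sum] at this; linarith
      have h3 : Δ i ≤ ∑ j ∈ b.1 ∪ b.2, |θ j - θstar j| := by
        have e1 : ∑ j ∈ b.1, (θstar j - θ j) ≤ ∑ j ∈ b.1, |θ j - θstar j| :=
          Finset.sum_le_sum (fun j _ => by rw [abs_sub_comm]; exact le_abs_self _)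
        have e2 : ∑ j ∈ b.2, (θ j - θstar j) ≤ ∑ j ∈ b.2, |θ j - θstar j| :=
          Finset.sum_le_sum (fun j _ => le_abs_self _)
        rw [Finset.sum_union (hdisj b hbB)]
        simp only [Finset.sum_sub_distrib] at e1 e2
        linarith
      obtain ⟨j0, hj0, hmax⟩ := Finset.exists_max_image (b.1 ∪ b.2)
        (fun j => |θ j - θstar j|) ⟨i, Finset.mem_union_right _ hib2⟩
      refine ⟨j0, h3.trans ?_⟩
      calc ∑ j ∈ b.1 ∪ b.2, |θ j - θstar j|
          ≤ (b.1 ∪ b.2).card • |θ j0 - θstar j0| :=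
            Finset.sum_le_card_nsmul _ _ _ (fun x hx => hmax x hx)
        _ = ((b.1 ∪ b.2).card : ℝ) * |θ j0 - θstar j0| := nsmul_eq_mul _ _
        _ ≤ w * |θ j0 - θstar j0| := by
            apply mul_le_mul_of_nonneg_right _ (abs_nonneg _)
            have := (Finset.card_union_le b.1 b.2).trans (hwidth b hbB)
            exact_mod_cast this
  have hwR : (0:ℝ) < w := by exact_mod_cast hw
  -- Part 1
  have part1 : ∀ i, ENNReal.ofReal (Δ i / w) ≤ Λ i := by
    intro i
    rw [hΛ i]
    refine le_iInf fun θ => le_iInf fun hθ => ?_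
    rw [hφstar] at hθ
    obtain ⟨j, hj⟩ := key θ i hθ.2
    refine le_trans ?_ (le_iSup _ j)
    apply ENNReal.ofReal_le_ofReal
    rw [div_le_iff₀ hwR]
    linarith
  refine ⟨part1, ?_⟩
  -- Part 2
  have step : ∀ i : Fin m, (Λ i ^ 2)⁻¹ ≤ ENNReal.ofReal ((w:ℝ)^2 * (1 / (Δ i)^2)) := by
    intro i
    by_cases hex : ∃ θ : Fin m → ℝ,
        (∀ j, θ j ∈ Set.Icc (0:ℝ) 1) ∧ ¬ ((i ∈ φ θ) ↔ (i ∈ φ θstar))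
    · obtain ⟨θ0, hθ0⟩ := hex
      -- Δ i > 0
      have hdis : φ θ0 ∈ Y ∧ ¬ ((i ∈ φ θ0) ↔ (i ∈ Sstar)) := by
        refine ⟨(hφ θ0).1, ?_⟩
        rw [hφstar] at hθ0
        exact hθ0.2
      have hΔpos : 0 < Δ i := by
        set A := ((fun S => ∑ j ∈ S, θstar j) '' {S | S ∈ Y ∧ ¬ ((i ∈ S) ↔ (i ∈ Sstar))})
        have hAne : A.Nonempty := ⟨_, ⟨φ θ0, ⟨hdis.1, hdis.2⟩, rfl⟩⟩
        have hmem := hAne.csSup_mem (hfin i)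
        obtain ⟨T, ⟨hTY, hTi⟩, hTeq⟩ := hmem
        have hTne : T ≠ Sstar := fun h => hTi (h ▸ Iff.rfl)
        have := huniq T hTY hTne
        rw [hΔ i, ← hTeq]
        linarith
      have hΔw : 0 < Δ i / w := div_pos hΔpos hwR
      have h1 : ENNReal.ofReal (Δ i / w) ^ 2 ≤ Λ i ^ 2 :=
        pow_le_pow_left₀ (zero_le) (part1 i) 2
      have h2 : (Λ i ^ 2)⁻¹ ≤ (ENNReal.ofReal (Δ i / w) ^ 2)⁻¹ :=
        ENNReal.inv_le_inv.mpr h1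
      refine h2.trans ?_
      rw [← ENNReal.ofReal_pow hΔw.le, ← ENNReal.ofReal_inv_of_pos (pow_pos hΔw 2)]
      apply ENNReal.ofReal_le_ofReal
      rw [div_pow, inv_div]
      rw [div_eq_mul_inv, one_div]
    · have hΛtop : Λ i = ⊤ := by
        rw [hΛ i]
        rw [iInf_eq_top]
        intro θ
        rw [iInf_eq_top]
        intro h
        exact absurd ⟨θ, h⟩ hex
      rw [hΛtop, ENNReal.top_pow (by norm_num), ENNReal.inv_top]
      exact zero_le
  calc ∑ i, (Λ i ^ 2)⁻¹
      ≤ ∑ i, ENNReal.ofReal ((w:ℝ)^2 * (1 / (Δ i)^2)) := Finset.sum_le_sum fun i _ => step i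
    _ = ENNReal.ofReal ((w:ℝ)^2 * ∑ i, 1 / (Δ i)^2) := by
        rw [Finset.mul_sum, ENNReal.ofReal_sum_of_nonneg]
        intro i _
        positivity
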